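/- Let m ≥ 2, α = [0; overline{1,m}], and let V = {n ∈ ℕ : ε_j(n) = 0 for j < k} with elements n_0 = 0 < n_1 < n_2 < ... in increasing order. Then for every v ≥ 1, the gap Q(v) = n_v − n_{v−1} belongs to {q_{k−1}, q_k}. -/

import Mathlib

open Finset
open scoped Classical

/-- e(x) = exp(2πi x) -/
noncomputable def e (x : ℝ) : ℂ := Complex.exp (2 * Real.pi * Complex.I * x)

/-- Denominators of α = [0; 1, m, 1, m, ...]. -/
def ostq (m : ℕ) : ℕ → ℕ
  | 0 => 1
  | 1 => 1
  | (i+2) => (if (i+2) % 2 = 0 then m * ostq m (i+1) else ostq m (i+1)) + ostq m i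

/-- φ(m) = (m + 2 + √(m² + 4m))/2. -/
noncomputable def phi (m : ℕ) : ℝ := ((m : ℝ) + 2 + Real.sqrt ((m : ℝ)^2 + 4*m)) / 2

/-- Partial quotients of α = [0; 1, m, 1, m, ...] : a_j = m if j even, 1 if j odd. -/
def pq (m j : ℕ) : ℕ := if j % 2 = 0 then m else 1

/-- Markov condition on digit sequences. -/
def Markov (m : ℕ) (ε : ℕ → ℕ) : Prop :=
  ε 0 < pq m 1 ∧ ∀ i, 1 ≤ i → ε i ≤ pq m (i+1) ∧ (ε i = pq m (i+1) → ε (i-1) = 0)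

/-- ε is the (finitely supported) Ostrowski digit sequence of n. -/
def IsOstRep (m n : ℕ) (ε : ℕ → ℕ) : Prop :=
  Markov m ε ∧ ∃ K, (∀ j, K ≤ j → ε j = 0) ∧ n = ∑ i ∈ Finset.range K, ε i * ostq m i

/-- The Ostrowski digits of n. -/
noncomputable def ostEps (m n : ℕ) : ℕ → ℕ :=
  if h : ∃ ε, IsOstRep m n ε then h.choose else fun _ => 0

/-- Ostrowski sum-of-digits function S_α. -/
noncomputable def Sfull (m n : ℕ) : ℕ := ∑ᶠ i, ostEps m n i

/-- Truncated Ostrowski sum-of-digits function S_{α,k}. -/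
noncomputable def Strunc (m k n : ℕ) : ℕ := ∑ i ∈ Finset.range k, ostEps m n i

/-- Distance to the nearest integer. -/
noncomputable def nint (x : ℝ) : ℝ := |x - round x|

namespace Ost

def val (m K : ℕ) (ε : ℕ → ℕ) : ℕ := ∑ i ∈ Finset.range K, ε i * ostq m i

variable {m k : ℕ} {ε : ℕ → ℕ}

lemma pq_pos (hm : 1 ≤ m) (j : ℕ) : 1 ≤ pq m j := by
  unfold pq; split <;> omega

lemma ostq_rec (m i : ℕ) : ostq m (i+2) = pq m (i+2) * ostq m (i+1) + ostq m i := by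
  rw [ostq, pq]; split <;> simp

lemma ostq_pos (m : ℕ) : ∀ i, 0 < ostq m i
  | 0 => Nat.one_pos
  | 1 => Nat.one_pos
  | (i+2) => by rw [ostq_rec]; exact Nat.add_pos_right _ (ostq_pos m i)

lemma ostq_le_succ (hm : 1 ≤ m) : ∀ i, ostq m i ≤ ostq m (i+1)
  | 0 => le_refl 1
  | (i+1) => by
      rw [ostq_rec]
      have h1 := pq_pos hm (i+2)
      have h2 := ostq_pos m (i+1)
      have := Nat.le_mul_of_pos_left (ostq m (i+1)) h1
      omega

lemma ostq_mono (hm : 1 ≤ m) {i j : ℕ} (h : i ≤ j) : ostq m i ≤ ostq m j :=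
  monotone_nat_of_le_succ (ostq_le_succ hm) h

lemma ostq_lt_succ (hm : 1 ≤ m) (i : ℕ) : ostq m (i+1) < ostq m (i+2) := by
  rw [ostq_rec]
  have h1 := pq_pos hm (i+2)
  have h2 := ostq_pos m i
  have h3 := ostq_pos m (i+1)
  have := Nat.le_mul_of_pos_left (ostq m (i+1)) h1
  omega

lemma ostq_lt (hm : 1 ≤ m) {i j : ℕ} (hi : 1 ≤ i) (h : i < j) : ostq m i < ostq m j := by
  obtain ⟨t, rfl⟩ : ∃ t, j = i + 1 + t := ⟨j - i - 1, by omega⟩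
  calc ostq m i < ostq m (i+1) := by
        obtain ⟨s, rfl⟩ : ∃ s, i = s + 1 := ⟨i - 1, by omega⟩
        exact ostq_lt_succ hm s
    _ ≤ ostq m (i+1+t) := ostq_mono hm (by omega)

lemma self_le_ostq (hm : 1 ≤ m) : ∀ i, i ≤ ostq m (i+1)
  | 0 => by simp [ostq]
  | 1 => by simp [ostq]
  | (i+2) => by
      have h1 := self_le_ostq hm (i+1)
      have h2 := ostq_pos m (i+1)
      have h3 := pq_pos hm (i+3)
      have h4 : ostq m (i+3) = pq m (i+3) * ostq m (i+2) + ostq m (i+1) := ostq_rec m (i+1)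
      have h5 := Nat.le_mul_of_pos_left (ostq m (i+2)) h3
      have e1 : i + 1 + 1 = i + 2 := rfl
      rw [e1] at h1
      show i + 2 ≤ ostq m (i+3)
      omega

lemma markov_zero (hε : Markov m ε) : ε 0 = 0 := by
  have := hε.1
  have : ε 0 < pq m 1 := this
  simp [pq] at this
  omega

lemma markov_le (hε : Markov m ε) (i : ℕ) : ε i ≤ pq m (i+1) := by
  rcases Nat.eq_zero_or_pos i with rfl | hi
  · rw [markov_zero hε]; exact Nat.zero_le _
  · exact (hε.2 i hi).1

lemma val_lt (hm : 1 ≤ m) (hε : Markov m ε) : ∀ K, val m K ε < ostq m K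
  | 0 => by simp [val, ostq]
  | 1 => by simp [val, Finset.sum_range_one, markov_zero hε, ostq]
  | (K+2) => by
      have hrec := ostq_rec m K
      have hq1 := ostq_pos m (K+1)
      have hs1 : val m (K+2) ε = val m (K+1) ε + ε (K+1) * ostq m (K+1) :=
        Finset.sum_range_succ _ _
      rcases eq_or_lt_of_le ((hε.2 (K+1) (by omega)).1) with heq | hlt
      · -- top digit maximal, ε K = 0
        have hz : ε K = 0 := by
          have := (hε.2 (K+1) (by omega)).2 heq
          simpa using this
        have hs2 : val m (K+1) ε = val m K ε + ε K * ostq m K := Finset.sum_range_succ _ _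
        have hK := val_lt hm hε K
        rw [hs1, hs2, hz, heq, hrec]
        simp only [zero_mul, add_zero]
        have e1 : K + 1 + 1 = K + 2 := rfl
        rw [e1]
        omega
      · have hK1 := val_lt hm hε (K+1)
        have hlt' : ε (K+1) < pq m (K+2) := hlt
        have h2 : (ε (K+1) + 1) * ostq m (K+1) ≤ pq m (K+2) * ostq m (K+1) :=
          Nat.mul_le_mul_right _ (by omega)
        rw [add_one_mul] at h2
        have hq0 := ostq_pos m K
        rw [hs1, hrec]
        omega

lemma val_stable {t : ℕ} (h : ∀ i, t ≤ i → ε i = 0) {s : ℕ} (hts : t ≤ s) :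
    val m s ε = val m t ε := by
  unfold val
  refine (Finset.sum_subset (Finset.range_subset_range.2 hts) ?_).symm
  intro i _ hi
  simp only [Finset.mem_range, not_lt] at hi
  rw [h i hi, zero_mul]

lemma val_succ {K : ℕ} : val m (K+1) ε = val m K ε + ε K * ostq m K :=
  Finset.sum_range_succ _ _

lemma val_prefix_zero (hz : ∀ j, j < k → ε j = 0) : val m k ε = 0 := by
  unfold val
  apply Finset.sum_eq_zero
  intro i hi
  rw [hz i (Finset.mem_range.1 hi), zero_mul]

lemma val_split {L t : ℕ} (h : t ≤ L) :
    val m L ε = val m t ε + ∑ i ∈ Finset.Ico t L, ε i * ostq m i := by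
  unfold val
  rw [Finset.range_eq_Ico, Finset.range_eq_Ico]
  exact (Finset.sum_Ico_consecutive (fun i => ε i * ostq m i) (Nat.zero_le t) h).symm

lemma valB (hm : 1 ≤ m) (hk : 2 ≤ k) (hε : Markov m ε) (hz : ∀ j, j < k → ε j = 0) :
    ∀ J, k ≤ J →
      val m J ε + ostq m k ≤ ostq m J ∨ val m J ε + ostq m (k-1) = ostq m J := by
  intro J
  induction J using Nat.strong_induction_on with
  | _ J ih =>
    intro hJ
    rcases eq_or_lt_of_le hJ with rfl | hlt
    · left; rw [val_prefix_zero hz]; omega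
    · obtain ⟨J', rfl⟩ : ∃ J', J = J' + 1 := ⟨J - 1, by omega⟩
      have hkJ' : k ≤ J' := by omega
      have hs1 : val m (J'+1) ε = val m J' ε + ε J' * ostq m J' := Finset.sum_range_succ _ _
      have hb := (hε.2 J' (by omega)).1
      have hrecJ : ostq m (J'+1) = pq m (J'+1) * ostq m J' + ostq m (J'-1) := by
        obtain ⟨s, rfl⟩ : ∃ s, J' = s + 1 := ⟨J' - 1, by omega⟩
        simpa using ostq_rec m s
      rcases eq_or_lt_of_le hb with heq | hlt2
      · -- top digit maximal
        have hz0 : ε (J'-1) = 0 := (hε.2 J' (by omega)).2 heq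
        rcases eq_or_lt_of_le hkJ' with rfl | hkJ''
        · -- J' = k
          right
          rw [hs1, val_prefix_zero hz, heq, hrecJ]
          omega
        · -- k < J'
          obtain ⟨s, rfl⟩ : ∃ s, J' = s + 1 := ⟨J' - 1, by omega⟩
          have hs2 : val m (s+1) ε = val m s ε + ε s * ostq m s := Finset.sum_range_succ _ _
          have hz0' : ε s = 0 := by simpa using hz0
          have hIH := ih s (by omega) (by omega)
          rw [hs1, hs2, hz0', heq, hrecJ]
          simp only [zero_mul, add_zero, Nat.add_sub_cancel]
          rcases hIH with h | h
          · left; omega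
          · right; omega
      · -- top digit below maximum
        have h2 : (ε J' + 1) * ostq m J' ≤ pq m (J'+1) * ostq m J' :=
          Nat.mul_le_mul_right _ (by omega)
        rw [add_one_mul] at h2
        rcases eq_or_lt_of_le hkJ' with rfl | hkJ''
        · left
          rw [hs1, val_prefix_zero hz]
          have : pq m (k+1) * ostq m k ≤ ostq m (k+1) := by rw [hrecJ]; omega
          omega
        · have hIH := ih J' (by omega) hkJ'
          have hmono1 : ostq m (k-1) ≤ ostq m k := ostq_mono hm (by omega)
          have hmono2 : ostq m k ≤ ostq m (J'-1) := ostq_mono hm (by omega)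
          have hv : val m J' ε + ostq m (k-1) ≤ ostq m J' := by
            rcases hIH with h | h
            · omega
            · omega
          left
          rw [hs1, hrecJ]
          omega

lemma val_pos_ge (hm : 1 ≤ m) (hz : ∀ j, j < k → ε j = 0) (J : ℕ)
    (h : val m J ε ≠ 0) : ostq m k ≤ val m J ε := by
  obtain ⟨i, hi, hne⟩ : ∃ i ∈ Finset.range J, ε i * ostq m i ≠ 0 := by
    by_contra hc
    push_neg at hc
    exact h (Finset.sum_eq_zero hc)
  have hik : k ≤ i := by
    by_contra hik
    push_neg at hik
    rw [hz i hik, zero_mul] at hne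
    exact hne rfl
  have h1 : ostq m i ≤ ε i * ostq m i := Nat.le_mul_of_pos_left _ (by
    rcases Nat.eq_zero_or_pos (ε i) with h0 | h0
    · rw [h0, zero_mul] at hne; exact absurd rfl hne
    · exact h0)
  calc ostq m k ≤ ostq m i := ostq_mono hm hik
    _ ≤ ε i * ostq m i := h1
    _ ≤ val m J ε := by
        unfold val
        exact Finset.single_le_sum (f := fun i => ε i * ostq m i) (fun j _ => Nat.zero_le _) hi

lemma val_inj (hm : 1 ≤ m) {ε' : ℕ → ℕ} (hε : Markov m ε) (hε' : Markov m ε') :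
    ∀ K, val m K ε = val m K ε' → ∀ i, i < K → ε i = ε' i := by
  intro K
  induction K with
  | zero => intro _ i hi; omega
  | succ K ihK =>
    intro h i hi
    have hs1 : val m (K+1) ε = val m K ε + ε K * ostq m K := Finset.sum_range_succ _ _
    have hs2 : val m (K+1) ε' = val m K ε' + ε' K * ostq m K := Finset.sum_range_succ _ _
    have b1 := val_lt hm hε K
    have b2 := val_lt hm hε' K
    have hq := ostq_pos m K
    have hKK : ε K = ε' K := by
      rcases le_or_gt (ε K) (ε' K) with hle | hlt
      · rcases eq_or_lt_of_le hle with h' | h'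
        · exact h'
        · exfalso
          have : (ε K + 1) * ostq m K ≤ ε' K * ostq m K := Nat.mul_le_mul_right _ h'
          rw [add_one_mul] at this
          omega
      · exfalso
        have : (ε' K + 1) * ostq m K ≤ ε K * ostq m K := Nat.mul_le_mul_right _ hlt
        rw [add_one_mul] at this
        omega
    have hval : val m K ε = val m K ε' := by
      rw [hs1, hs2, hKK] at h
      omega
    rcases Nat.lt_or_ge i K with h' | h'
    · exact ihK hval i h'
    · have : i = K := by omega
      rw [this]; exact hKK

lemma rep_unique (hm : 1 ≤ m) {n : ℕ} {ε ε' : ℕ → ℕ}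
    (h1 : IsOstRep m n ε) (h2 : IsOstRep m n ε') : ε = ε' := by
  obtain ⟨hM1, K1, hK1, hn1⟩ := h1
  obtain ⟨hM2, K2, hK2, hn2⟩ := h2
  set L := max K1 K2 with hL
  have hv1 : val m L ε = n := by
    rw [val_stable hK1 (le_max_left _ _)]; exact hn1.symm
  have hv2 : val m L ε' = n := by
    rw [val_stable hK2 (le_max_right _ _)]; exact hn2.symm
  funext i
  rcases Nat.lt_or_ge i L with hi | hi
  · exact val_inj hm hM1 hM2 L (hv1.trans hv2.symm) i hi
  · rw [hK1 i (le_trans (le_max_left _ _) hi), hK2 i (le_trans (le_max_right _ _) hi)]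

lemma isOstRep_ostEps {n : ℕ} (h : ∃ ε, IsOstRep m n ε) : IsOstRep m n (ostEps m n) := by
  rw [ostEps, dif_pos h]
  exact h.choose_spec

lemma ostEps_eq (hm : 1 ≤ m) {n : ℕ} {ε : ℕ → ℕ} (h : IsOstRep m n ε) : ostEps m n = ε :=
  rep_unique hm (isOstRep_ostEps ⟨ε, h⟩) h

lemma val_update {K j b : ℕ} (hjK : j < K) :
    val m K (fun i => if i = j then b else ε i) + ε j * ostq m j
      = val m K ε + b * ostq m j := by
  have hj : j ∈ Finset.range K := Finset.mem_range.2 hjK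
  have h1 := Finset.sum_eq_sum_sdiff_singleton_add hj
    (fun i => (if i = j then b else ε i) * ostq m i)
  have h2 := Finset.sum_eq_sum_sdiff_singleton_add hj (fun i => ε i * ostq m i)
  have h3 : ∑ i ∈ Finset.range K \ {j}, (if i = j then b else ε i) * ostq m i
      = ∑ i ∈ Finset.range K \ {j}, ε i * ostq m i := by
    refine Finset.sum_congr rfl (fun i hi => ?_)
    have : i ≠ j := by
      have := (Finset.mem_sdiff.1 hi).2
      simpa using this
    rw [if_neg this]
  have h4 : (if j = j then b else ε j) = b := if_pos rfl
  rw [h4] at h1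
  unfold val
  beta_reduce
  omega

lemma markov_update_zero (hm : 1 ≤ m) (hε : Markov m ε) (j : ℕ) :
    Markov m (fun i => if i = j then 0 else ε i) := by
  constructor
  · by_cases h0 : (0:ℕ) = j
    · simp only [if_pos h0]
      exact pq_pos hm 1
    · simp only [if_neg h0]
      exact hε.1
  · intro i hi
    by_cases hij : i = j
    · refine ⟨by simp [hij], ?_⟩
      simp only [if_pos hij]
      intro h
      exact absurd h.symm (by have := pq_pos hm (i+1); omega)
    · simp only [if_neg hij]
      refine ⟨(hε.2 i hi).1, fun h => ?_⟩
      by_cases hij1 : i - 1 = j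
      · simp [hij1]
      · simp only [if_neg hij1]
        exact (hε.2 i hi).2 h

lemma exists_rep (hm : 1 ≤ m) :
    ∀ n, ∃ ε, IsOstRep m n ε ∧ ∀ i, 1 ≤ i → n < ostq m i → ε i = 0 := by
  intro n
  induction n using Nat.strong_induction_on with | _ n ihn =>
  rcases Nat.eq_zero_or_pos n with rfl | hn
  · refine ⟨fun _ => 0, ⟨⟨pq_pos hm 1, fun i _ => ⟨Nat.zero_le _, fun _ => rfl⟩⟩,
      0, fun _ _ => rfl, by simp⟩, fun _ _ _ => rfl⟩
  · set P : ℕ → Prop := fun j => ostq m j ≤ n with hP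
    set j := Nat.findGreatest P (n+1) with hj
    have hq1 : ostq m 1 = 1 := rfl
    have hj1 : 1 ≤ j := Nat.le_findGreatest (by omega) (by rw [hP]; simp [hq1]; omega)
    have hjn : ostq m j ≤ n := Nat.findGreatest_spec (P := P) (by omega : 1 ≤ n+1)
      (by rw [hP]; simp [hq1]; omega)
    have hgt : ∀ i, j < i → n < ostq m i := by
      intro i hi
      rcases le_or_gt i (n+1) with h | h
      · have := Nat.findGreatest_is_greatest (P := P) hi h
        rw [hP] at this
        omega
      · have h1 : n + 1 ≤ ostq m (n+2) := self_le_ostq hm (n+1)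
        have h2 : ostq m (n+2) ≤ ostq m i := ostq_mono hm (by omega)
        omega
    have hjn1 : n < ostq m (j+1) := hgt (j+1) (by omega)
    have hqpos := ostq_pos m j
    set d := n / ostq m j with hd
    set r := n % ostq m j with hr
    have hdm : ostq m j * d + r = n := Nat.div_add_mod n (ostq m j)
    have hrlt : r < ostq m j := Nat.mod_lt _ hqpos
    have hd1 : 1 ≤ d := by
      rw [hd]
      exact Nat.one_le_div_iff hqpos |>.2 hjn
    have hrecj : ostq m (j+1) = pq m (j+1) * ostq m j + ostq m (j-1) := by
      have e1 : j - 1 + 2 = j + 1 := by omega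
      have e2 : j - 1 + 1 = j := by omega
      have h := ostq_rec m (j-1)
      rw [e1, e2] at h
      exact h
    have hmon : ostq m (j-1) ≤ ostq m j := ostq_mono hm (by omega)
    have hda : d ≤ pq m (j+1) := by
      have : n < (pq m (j+1) + 1) * ostq m j := by rw [add_one_mul]; omega
      have := (Nat.div_lt_iff_lt_mul hqpos).2 this
      omega
    have hrn : r < n := by omega
    obtain ⟨ε', ⟨hM', K', hK', hsum'⟩, hz'⟩ := ihn r hrn
    have hz'' : ∀ i, j ≤ i → ε' i = 0 := by
      intro i hi
      have h1 : ostq m j ≤ ostq m i := ostq_mono hm hi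
      exact hz' i (by omega) (by omega)
    have hvr : val m j ε' = r := by
      rcases le_total K' j with h | h
      · rw [val_stable hK' h]
        exact hsum'.symm
      · have := val_stable (m := m) hz'' h
        rw [← this]
        exact hsum'.symm
    refine ⟨fun i => if i = j then d else ε' i, ⟨⟨?_, ?_⟩, j+1, ?_, ?_⟩, ?_⟩
    · simp only [if_neg (by omega : ¬ (0:ℕ) = j)]
      exact hM'.1
    · intro i hi
      by_cases hij : i = j
      · simp only [if_pos hij, if_neg (by omega : ¬ i - 1 = j)]
        rw [hij]
        refine ⟨hda, fun hdq => ?_⟩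
        have hrj1 : r < ostq m (j-1) := by
          rw [hdq] at hdm
          have hcomm : ostq m j * pq m (j + 1) = pq m (j + 1) * ostq m j := Nat.mul_comm _ _
          omega
        rcases Nat.eq_zero_or_pos (j-1) with h1 | h1
        · rw [h1]; exact markov_zero hM'
        · exact hz' (j-1) h1 hrj1
      · simp only [if_neg hij]
        refine ⟨(hM'.2 i hi).1, fun h => ?_⟩
        by_cases hij1 : i - 1 = j
        · have : i = j + 1 := by omega
          have : ε' i = 0 := hz'' i (by omega)
          rw [this] at h
          have := pq_pos hm (i+1)
          omega
        · simp only [if_neg hij1]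
          exact (hM'.2 i hi).2 h
    · intro i hi
      beta_reduce
      rw [if_neg (by omega : ¬ i = j)]
      exact hz'' i (by omega)
    · have hs : val m (j+1) (fun i => if i = j then d else ε' i)
          = val m j (fun i => if i = j then d else ε' i)
            + (if j = j then d else ε' j) * ostq m j :=
        Finset.sum_range_succ _ _
      have h4 : (if j = j then d else ε' j) = d := if_pos rfl
      rw [h4] at hs
      have hcongr : val m j (fun i => if i = j then d else ε' i) = val m j ε' := by
        unfold val
        refine Finset.sum_congr rfl (fun i hi => ?_)
        beta_reduce
        rw [if_neg (by have := Finset.mem_range.1 hi; omega : ¬ i = j)]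
      show n = val m (j+1) _
      rw [hs, hcongr, hvr]
      have : d * ostq m j = ostq m j * d := Nat.mul_comm _ _
      omega
    · intro i hi1 hi2
      have hij : ¬ i = j := by
        intro h; rw [h] at hi2; omega
      beta_reduce
      rw [if_neg hij]
      rcases le_or_gt i j with h | h
      · have : ostq m i ≤ ostq m j := ostq_mono hm h
        omega
      · exact hz' i hi1 (by omega)

lemma add_q (hm : 1 ≤ m) (K : ℕ) : ∀ t j ε, Markov m ε → (∀ i, K ≤ i → ε i = 0) →
    K ≤ j + t → 1 ≤ j → ε (j-1) = 0 → ε j < pq m (j+1) →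
    ∃ ε', IsOstRep m (val m K ε + ostq m j) ε' ∧ ∀ i, i < j → ε' i = ε i := by
  intro t
  induction t using Nat.strong_induction_on with | _ t ih =>
  intro j ε hε hsupp hKt hj hj0 hjlt
  by_cases hc : ε (j+1) < pq m (j+2)
  · -- no carry: increment digit j
    set K1 := max K (j+1) with hK1
    refine ⟨fun i => if i = j then ε j + 1 else ε i, ⟨⟨?_, ?_⟩, K1, ?_, ?_⟩, ?_⟩
    · simp only [if_neg (by omega : ¬ (0:ℕ) = j)]
      exact hε.1
    · intro i hi
      by_cases hij : i = j
      · simp only [if_pos hij, if_neg (by omega : ¬ i - 1 = j)]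
        rw [hij]
        exact ⟨by omega, fun _ => hj0⟩
      · by_cases hij1 : i = j + 1
        · subst hij1
          have hc' : ε (j+1) < pq m (j+1+1) := hc
          simp only [if_neg hij]
          exact ⟨by omega, fun h => absurd h (by omega)⟩
        · simp only [if_neg hij, if_neg (by omega : ¬ i - 1 = j)]
          exact hε.2 i hi
    · intro i hi
      beta_reduce
      rw [if_neg (by omega : ¬ i = j)]
      exact hsupp i (by omega)
    · show val m K ε + ostq m j = val m K1 (fun i => if i = j then ε j + 1 else ε i)
      have h1 : val m K1 (fun i => if i = j then ε j + 1 else ε i) + ε j * ostq m j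
          = val m K1 ε + (ε j + 1) * ostq m j := val_update (by omega)
      have h2 : val m K1 ε = val m K ε := val_stable (m := m) hsupp (le_max_left _ _)
      rw [add_one_mul] at h1
      omega
    · intro i hi
      beta_reduce
      rw [if_neg (by omega : ¬ i = j)]
  · -- carry: digit j+1 is maximal, zero it and recurse at j+2
    have hb : ε (j+1) = pq m (j+2) := le_antisymm (hε.2 (j+1) (by omega)).1 (not_lt.1 hc)
    have h0 : ε j = 0 := by
      have := (hε.2 (j+1) (by omega)).2 hb
      simpa using this
    have hpq2 := pq_pos hm (j+2)
    have hjK : j + 1 < K := by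
      by_contra h
      push_neg at h
      have := hsupp (j+1) h
      omega
    have ht2 : 2 ≤ t := by omega
    set ζ : ℕ → ℕ := fun i => if i = j+1 then 0 else ε i with hζ
    have hζM : Markov m ζ := markov_update_zero hm hε (j+1)
    have hζsupp : ∀ i, K ≤ i → ζ i = 0 := by
      intro i hi
      rw [hζ]
      simp only
      split
      · rfl
      · exact hsupp i hi
    have hζ1 : ζ (j+2-1) = 0 := by rw [hζ]; simp
    have hζ2 : ζ (j+2) < pq m (j+3) := by
      have he : ζ (j+2) = ε (j+2) := by rw [hζ]; simp
      rw [he]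
      rcases eq_or_lt_of_le ((hε.2 (j+2) (by omega)).1) with heq | hlt
      · exfalso
        have h5 := (hε.2 (j+2) (by omega)).2 heq
        have e1 : j + 2 - 1 = j + 1 := rfl
        rw [e1] at h5
        omega
      · have e2 : j + 2 + 1 = j + 3 := rfl
        rw [e2] at hlt
        exact hlt
    obtain ⟨ε', hrep, hpre⟩ := ih (t-2) (by omega) (j+2) ζ hζM hζsupp (by omega) (by omega) hζ1 hζ2
    have hval : val m K ζ + ε (j+1) * ostq m (j+1) = val m K ε + 0 * ostq m (j+1) := by
      have := val_update (m := m) (ε := ε) (K := K) (j := j+1) (b := 0) (by omega)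
      rw [hζ]
      omega
    have hrecj : ostq m (j+2) = pq m (j+2) * ostq m (j+1) + ostq m j := ostq_rec m j
    have hmul : ε (j+1) * ostq m (j+1) = pq m (j+2) * ostq m (j+1) := by rw [hb]
    have hfinal : val m K ζ + ostq m (j+2) = val m K ε + ostq m j := by omega
    rw [hfinal] at hrep
    refine ⟨ε', hrep, fun i hi => ?_⟩
    rw [hpre i (by omega), hζ]
    simp only [if_neg (by omega : ¬ i = j+1)]

lemma gap (hm : 1 ≤ m) (hk : 2 ≤ k) {ε ε' : ℕ → ℕ} {K K' n x : ℕ}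
    (hε : Markov m ε) (hε' : Markov m ε')
    (hsK : ∀ i, K ≤ i → ε i = 0) (hsK' : ∀ i, K' ≤ i → ε' i = 0)
    (hzk : ∀ j, j < k → ε j = 0) (hzk' : ∀ j, j < k → ε' j = 0)
    (hn : n = val m K ε) (hx : x = val m K' ε') (hlt : n < x) :
    n + ostq m (k-1) ≤ x ∧ (x < n + ostq m k → x = n + ostq m (k-1)) := by
  set L := max K K' with hL
  have hvn : val m L ε = n := by
    rw [val_stable (m := m) hsK (le_max_left _ _)]; exact hn.symm
  have hvx : val m L ε' = x := by
    rw [val_stable (m := m) hsK' (le_max_right _ _)]; exact hx.symm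
  set P : ℕ → Prop := fun i => ε i ≠ ε' i with hP
  have hne : ∃ i, i < L ∧ P i := by
    by_contra hcon
    push_neg at hcon
    have : val m L ε = val m L ε' := by
      refine Finset.sum_congr rfl (fun i hi => ?_)
      have h9 := hcon i (Finset.mem_range.1 hi)
      simp only [hP, ne_eq, not_not] at h9
      rw [h9]
    omega
  obtain ⟨i0, hi0L, hi0⟩ := hne
  set J := Nat.findGreatest P L with hJ
  have hPJ : P J := Nat.findGreatest_spec (P := P) (by omega : i0 ≤ L) hi0
  have hJL : J < L := by
    have h1 : J ≤ L := Nat.findGreatest_le L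
    rcases eq_or_lt_of_le h1 with h2 | h2
    · exfalso
      rw [hP] at hPJ
      rw [h2, hsK L (le_max_left _ _), hsK' L (le_max_right _ _)] at hPJ
      exact hPJ rfl
    · exact h2
  have hJk : k ≤ J := by
    by_contra h
    push_neg at h
    rw [hP] at hPJ
    rw [hzk J h, hzk' J h] at hPJ
    exact hPJ rfl
  have hmax : ∀ i, J < i → ε i = ε' i := by
    intro i hi
    rcases le_or_gt i L with h | h
    · have := Nat.findGreatest_is_greatest (P := P) hi h
      rw [hP] at this
      simpa using this
    · rw [hsK i (by omega), hsK' i (by omega)]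
  -- split sums at J
  have hsplit : val m L ε = val m J ε + ε J * ostq m J
      + ∑ i ∈ Finset.Ico (J+1) L, ε i * ostq m i := by
    rw [val_split (m := m) (by omega : J + 1 ≤ L), val_succ]
  have hsplit' : val m L ε' = val m J ε' + ε' J * ostq m J
      + ∑ i ∈ Finset.Ico (J+1) L, ε i * ostq m i := by
    rw [val_split (m := m) (by omega : J + 1 ≤ L), val_succ]
    have : ∑ i ∈ Finset.Ico (J+1) L, ε' i * ostq m i
        = ∑ i ∈ Finset.Ico (J+1) L, ε i * ostq m i := by
      refine Finset.sum_congr rfl (fun i hi => ?_)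
      rw [hmax i (Finset.mem_Ico.1 hi).1]
    rw [this]
  set T := ∑ i ∈ Finset.Ico (J+1) L, ε i * ostq m i with hT
  set S := val m J ε with hS
  set S' := val m J ε' with hS'
  -- bounds
  have hB := valB hm hk hε hzk J hJk
  have hB' := valB hm hk hε' hzk' J hJk
  have hm1 : ostq m (k-1) ≤ ostq m k := ostq_mono hm (by omega)
  have hm2 : ostq m k ≤ ostq m J := ostq_mono hm hJk
  have hq1 : 0 < ostq m (k-1) := ostq_pos m _
  have hq2 : 0 < ostq m k := ostq_pos m _
  have hkk : ostq m (k-1) < ostq m k := ostq_lt hm (by omega) (by omega)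
  have hSb : S + ostq m (k-1) ≤ ostq m J := by rcases hB with h | h <;> omega
  have hSb' : S' + ostq m (k-1) ≤ ostq m J := by rcases hB' with h | h <;> omega
  -- compare top digits
  have heJ : ε J + 1 ≤ ε' J := by
    by_contra h
    push_neg at h
    have h2 : ε' J < ε J := by
      rw [hP] at hPJ
      omega
    have h3 : (ε' J + 1) * ostq m J ≤ ε J * ostq m J := Nat.mul_le_mul_right _ (by omega)
    rw [add_one_mul] at h3
    omega
  have h4 : (ε J + 1) * ostq m J ≤ ε' J * ostq m J := Nat.mul_le_mul_right _ heJ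
  rw [add_one_mul] at h4
  constructor
  · omega
  · intro hxu
    -- show the top digits differ by exactly one
    have he1 : ε' J = ε J + 1 := by
      by_contra h
      have h5 : ε J + 2 ≤ ε' J := by omega
      have h6 : (ε J + 2) * ostq m J ≤ ε' J * ostq m J := Nat.mul_le_mul_right _ h5
      have h7 : (ε J + 2) * ostq m J = ε J * ostq m J + 2 * ostq m J := by ring
      omega
    have he2 : ε' J * ostq m J = ε J * ostq m J + ostq m J := by
      rw [he1, add_one_mul]
    -- deduce S is at its maximum
    have hSmax : S + ostq m (k-1) = ostq m J := by
      rcases hB with h | h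
      · exfalso; omega
      · exact h
    -- S' must vanish
    have hS0 : S' = 0 := by
      by_contra h
      have := val_pos_ge hm hzk' J h
      omega
    omega


end Ost

open Ost

theorem stmt13 (m k : ℕ) (hm : 2 ≤ m) (hk : 2 ≤ k) (nv : ℕ → ℕ)
    (hmono : StrictMono nv) (h0 : nv 0 = 0)
    (hrange : ∀ x : ℕ, (∃ v, nv v = x) ↔ ∀ j, j < k → ostEps m x j = 0) :
    ∀ v : ℕ, 1 ≤ v → nv v - nv (v - 1) = ostq m (k - 1) ∨ nv v - nv (v - 1) = ostq m k := by
  have hm1 : 1 ≤ m := by omega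
  intro v hv
  set n := nv (v-1) with hn
  set x := nv v with hx
  have hlt : n < x := hmono (by omega)
  have hnV : ∀ j, j < k → ostEps m n j = 0 := (hrange n).1 ⟨v-1, rfl⟩
  have hxV : ∀ j, j < k → ostEps m x j = 0 := (hrange x).1 ⟨v, rfl⟩
  obtain ⟨ε0, h0', _⟩ := exists_rep hm1 n
  have hrepn : IsOstRep m n (ostEps m n) := isOstRep_ostEps ⟨ε0, h0'⟩
  obtain ⟨ε1, h1', _⟩ := exists_rep hm1 x
  have hrepx : IsOstRep m x (ostEps m x) := isOstRep_ostEps ⟨ε1, h1'⟩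
  set ε := ostEps m n with hεd
  obtain ⟨hεM, K, hεK, hεsum⟩ := hrepn
  set ε' := ostEps m x with hεd'
  obtain ⟨hεM', K', hεK', hεsum'⟩ := hrepx
  -- the least element of V above n:
  -- helper to conclude x ≤ y for any y in V with n < y
  have hxle : ∀ y : ℕ, (∀ j, j < k → ostEps m y j = 0) → n < y → x ≤ y := by
    intro y hy hny
    obtain ⟨w, hw⟩ := (hrange y).2 hy
    have hvw : v - 1 < w := by
      have := hmono.lt_iff_lt (a := v-1) (b := w)
      rw [hw] at this
      omega
    have : v ≤ w := by omega
    calc x = nv v := rfl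
      _ ≤ nv w := hmono.monotone this
      _ = y := hw
  have hgap := gap (n := n) (x := x) hm1 hk hεM hεM' hεK hεK' hnV hxV hεsum hεsum' hlt
  by_cases hek : ε k < pq m (k+1)
  · -- can add ostq m k
    obtain ⟨ζ', hζrep, hζpre⟩ := add_q hm1 K K k ε hεM hεK (by omega) (by omega)
      (hnV (k-1) (by omega)) hek
    have hsum2 : val m K ε = n := hεsum.symm
    rw [hsum2] at hζrep
    have hζeps : ostEps m (n + ostq m k) = ζ' := ostEps_eq hm1 hζrep
    have hyV : ∀ j, j < k → ostEps m (n + ostq m k) j = 0 := by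
      intro j hj
      rw [hζeps, hζpre j hj]
      exact hnV j hj
    have hxy : x ≤ n + ostq m k := hxle _ hyV (by have := ostq_pos m k; omega)
    rcases eq_or_lt_of_le hxy with h | h
    · right
      omega
    · left
      have := hgap.2 h
      omega
  · -- top truncated digit is maximal: n + ostq m (k-1) is in V
    have hb : ε k = pq m (k+1) := le_antisymm ((hεM.2 k (by omega)).1) (not_lt.1 hek)
    have hpq := pq_pos hm1 (k+1)
    have hkK : k < K := by
      by_contra h
      push_neg at h
      have := hεK k h
      omega
    set ζ : ℕ → ℕ := fun i => if i = k then 0 else ε i with hζd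
    have hζM : Markov m ζ := markov_update_zero hm1 hεM k
    have hζsupp : ∀ i, K ≤ i → ζ i = 0 := by
      intro i hi
      rw [hζd]
      simp only
      split
      · rfl
      · exact hεK i hi
    have hζ1 : ζ (k+1-1) = 0 := by rw [hζd]; simp
    have hζ2 : ζ (k+1) < pq m (k+2) := by
      have he : ζ (k+1) = ε (k+1) := by rw [hζd]; simp
      rw [he]
      rcases eq_or_lt_of_le ((hεM.2 (k+1) (by omega)).1) with heq | hlt2
      · exfalso
        have h5 := (hεM.2 (k+1) (by omega)).2 heq
        have e1 : k + 1 - 1 = k := rfl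
        rw [e1] at h5
        omega
      · have e2 : k + 1 + 1 = k + 2 := rfl
        rw [e2] at hlt2
        exact hlt2
    obtain ⟨ζ', hζrep, hζpre⟩ := add_q hm1 K (K+2) (k+1) ζ hζM hζsupp (by omega) (by omega)
      hζ1 hζ2
    have hval : val m K ζ + ε k * ostq m k = val m K ε + 0 * ostq m k := by
      have := val_update (m := m) (ε := ε) (K := K) (j := k) (b := 0) (by omega : k < K)
      rw [hζd]
      omega
    have hrecj : ostq m (k+1) = pq m (k+1) * ostq m k + ostq m (k-1) := by
      have e1 : k - 1 + 2 = k + 1 := by omega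
      have e2 : k - 1 + 1 = k := by omega
      have h := ostq_rec m (k-1)
      rw [e1, e2] at h
      exact h
    have hmul : ε k * ostq m k = pq m (k+1) * ostq m k := by rw [hb]
    have hsum2 : val m K ε = n := hεsum.symm
    have hfinal : val m K ζ + ostq m (k+1) = n + ostq m (k-1) := by omega
    rw [hfinal] at hζrep
    have hζeps : ostEps m (n + ostq m (k-1)) = ζ' := ostEps_eq hm1 hζrep
    have hyV : ∀ j, j < k → ostEps m (n + ostq m (k-1)) j = 0 := by
      intro j hj
      rw [hζeps, hζpre j (by omega), hζd]
      simp only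
      split
      · rfl
      · exact hnV j hj
    have hxy : x ≤ n + ostq m (k-1) := hxle _ hyV (by have := ostq_pos m (k-1); omega)
    left
    have := hgap.1
    omega
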